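/- arXiv:2310.00744 — 5 statements merged into one kernel-verified Lean document; each statement's English description precedes it below -/
import Mathlib

section
/- Suppose S ∈ ℝ^{n×n} is invertible, H ∈ ℝ^{m×n}, λ > 0, and the 3×3 block matrix [[SᵀAᵀ + A·S + HᵀBᵀ + B·H, B̂_w, SᵀCᵀ + HᵀDᵀ], [B̂_wᵀ, −λ·I_p, D̂_wᵀ], [C·S + D·H, D̂_w, −I_n]] is negative definite. Then, setting K = H·S⁻¹ and P = S⁻¹, the matrix Ξ is negative definite. (This is the algebraic core of Theorem 1: feasibility of the LMI (OP₁) implies the H∞ dissipation matrix inequality Ξ ≺ 0 for the closed-loop system.) -/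
open Matrix

/-- A real square matrix `M` is negative definite if `xᵀ M x < 0` for all `x ≠ 0`. -/
def NegDef {ι : Type*} [Fintype ι] (M : Matrix ι ι ℝ) : Prop :=
  ∀ x : ι → ℝ, x ≠ 0 → x ⬝ᵥ M *ᵥ x < 0

/-- The H∞ dissipation block matrix Ξ. -/
noncomputable def Xi {n m p : ℕ} (A C : Matrix (Fin n) (Fin n) ℝ)
    (B D : Matrix (Fin n) (Fin m) ℝ) (Bw Dw : Matrix (Fin n) (Fin p) ℝ)
    (K : Matrix (Fin m) (Fin n) ℝ) (P : Matrix (Fin n) (Fin n) ℝ) (lam : ℝ) :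
    Matrix (Fin n ⊕ Fin p) (Fin n ⊕ Fin p) ℝ :=
  Matrix.fromBlocks
    ((A + B * K)ᵀ * P + Pᵀ * (A + B * K) + (C + D * K)ᵀ * (C + D * K))
    (Pᵀ * Bw + (C + D * K)ᵀ * Dw)
    (Bwᵀ * P + Dwᵀ * (C + D * K))
    (Dwᵀ * Dw - lam • (1 : Matrix (Fin p) (Fin p) ℝ))

/-- Feasibility of the LMI (OP₁) implies Ξ ≺ 0 with `K = H·S⁻¹`, `P = S⁻¹`. -/
theorem stmt0 {n m p : ℕ} (A C : Matrix (Fin n) (Fin n) ℝ)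
    (B D : Matrix (Fin n) (Fin m) ℝ) (Bw Dw : Matrix (Fin n) (Fin p) ℝ)
    (S : Matrix (Fin n) (Fin n) ℝ) (H : Matrix (Fin m) (Fin n) ℝ) (lam : ℝ)
    (hS : IsUnit S) (hlam : 0 < lam)
    (hLMI : NegDef (Matrix.fromBlocks
      (Sᵀ * Aᵀ + A * S + Hᵀ * Bᵀ + B * H)
      (Matrix.fromCols Bw (Sᵀ * Cᵀ + Hᵀ * Dᵀ))
      (Matrix.fromRows Bwᵀ (C * S + D * H))
      (Matrix.fromBlocks (-lam • (1 : Matrix (Fin p) (Fin p) ℝ)) Dwᵀ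
        Dw (-(1 : Matrix (Fin n) (Fin n) ℝ))))) :
    NegDef (Xi A C B D Bw Dw (H * S⁻¹) S⁻¹ lam) := by
  intro x hx
  have hSdet : IsUnit S.det := (Matrix.isUnit_iff_isUnit_det S).mp hS
  set x1 : Fin n → ℝ := x ∘ Sum.inl with hx1
  set x2 : Fin p → ℝ := x ∘ Sum.inr with hx2
  set s : Fin n → ℝ := S⁻¹ *ᵥ x1 with hs
  have hx1s : S *ᵥ s = x1 := by
    rw [hs, Matrix.mulVec_mulVec, Matrix.mul_nonsing_inv S hSdet, Matrix.one_mulVec]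
  have hinv : ∀ v : Fin n → ℝ, S⁻¹ *ᵥ (S *ᵥ v) = v := by
    intro v
    rw [Matrix.mulVec_mulVec, Matrix.nonsing_inv_mul S hSdet, Matrix.one_mulVec]
  set y : Fin n → ℝ := (C * S + D * H) *ᵥ s + Dw *ᵥ x2 with hy
  set z : Fin n ⊕ (Fin p ⊕ Fin n) → ℝ := Sum.elim s (Sum.elim x2 y) with hz
  have hzne : z ≠ 0 := by
    intro h
    apply hx
    have hs0 : s = 0 := by funext j; exact congrFun h (Sum.inl j)
    have hx10 : x1 = 0 := by rw [← hx1s, hs0, Matrix.mulVec_zero]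
    funext i
    cases i with
    | inl i => exact congrFun hx10 i
    | inr i => exact congrFun h (Sum.inr (Sum.inl i))
  have hlt := hLMI z hzne
  have hxe : x = Sum.elim x1 x2 := by
    funext i; cases i <;> rfl
  have key : x ⬝ᵥ (Xi A C B D Bw Dw (H * S⁻¹) S⁻¹ lam) *ᵥ x
      = z ⬝ᵥ (Matrix.fromBlocks
      (Sᵀ * Aᵀ + A * S + Hᵀ * Bᵀ + B * H)
      (Matrix.fromCols Bw (Sᵀ * Cᵀ + Hᵀ * Dᵀ))
      (Matrix.fromRows Bwᵀ (C * S + D * H))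
      (Matrix.fromBlocks (-lam • (1 : Matrix (Fin p) (Fin p) ℝ)) Dwᵀ
        Dw (-(1 : Matrix (Fin n) (Fin n) ℝ)))) *ᵥ z := by
    rw [hxe, hz, hy, Xi]
    rw [← hx1s]
    simp only [Matrix.fromBlocks_mulVec, Sum.elim_comp_inl, Sum.elim_comp_inr,
      Matrix.fromCols_mulVec_sumElim, Matrix.fromRows_mulVec,
      sumElim_dotProduct_sumElim,
      Matrix.add_mulVec, Matrix.sub_mulVec, Matrix.neg_mulVec, Matrix.smul_mulVec,
      Matrix.one_mulVec, Matrix.mulVec_add, Matrix.mulVec_smul,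
      ← Matrix.mulVec_mulVec, hinv,
      dotProduct_add, add_dotProduct, dotProduct_sub,
      sub_dotProduct, dotProduct_neg, neg_dotProduct,
      dotProduct_smul, smul_dotProduct,
      Matrix.dotProduct_mulVec, Matrix.vecMul_transpose, Matrix.vecMul_vecMul]
    simp only [Matrix.add_vecMul, add_dotProduct, neg_smul]
    ring
  rw [key]; exact hlt
end

section
/- Let E ∈ ℝ^{n×n}, E^⊥ ∈ ℝ^{n×a} with E·E^⊥ = 0, let X ∈ ℝ^{n×n} be symmetric positive semidefinite, and let W ∈ ℝ^{a×n}. If S = X·Eᵀ + E^⊥·W is invertible and P = S⁻¹, then EᵀP = PᵀE = Pᵀ·E·X·Eᵀ·P, and in particular EᵀP is positive semidefinite. (This shows that the parametrization S = XEᵀ + E^⊥W used in Theorem 1 guarantees the Lyapunov condition EᵀP = PᵀE ⪰ 0.) -/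
open Matrix

/-- If `E·E^⊥ = 0`, `X` is symmetric positive semidefinite, and
`S = X·Eᵀ + E^⊥·W` is invertible with `P = S⁻¹`, then
`EᵀP = PᵀE = Pᵀ·E·X·Eᵀ·P`; in particular `EᵀP` is positive semidefinite. -/
theorem stmt1 {n a : ℕ} (E : Matrix (Fin n) (Fin n) ℝ)
    (Eperp : Matrix (Fin n) (Fin a) ℝ) (hperp : E * Eperp = 0)
    (X : Matrix (Fin n) (Fin n) ℝ) (hX : X.PosSemidef)
    (W : Matrix (Fin a) (Fin n) ℝ)
    (S : Matrix (Fin n) (Fin n) ℝ) (hSdef : S = X * Eᵀ + Eperp * W)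
    (hS : IsUnit S)
    (P : Matrix (Fin n) (Fin n) ℝ) (hP : P = S⁻¹) :
    Eᵀ * P = Pᵀ * E ∧ Pᵀ * E = Pᵀ * E * X * Eᵀ * P ∧ (Eᵀ * P).PosSemidef := by
  have hSP : S * P = 1 := by
    rw [hP]; exact mul_nonsing_inv S ((Matrix.isUnit_iff_isUnit_det S).mp hS)
  have hES : E * S = E * X * Eᵀ := by
    rw [hSdef, Matrix.mul_add, ← Matrix.mul_assoc, ← Matrix.mul_assoc, hperp,
      Matrix.zero_mul, add_zero]
  have key : Pᵀ * E = Pᵀ * E * X * Eᵀ * P := by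
    calc Pᵀ * E = Pᵀ * E * (S * P) := by rw [hSP, Matrix.mul_one]
    _ = Pᵀ * (E * S) * P := by rw [Matrix.mul_assoc, Matrix.mul_assoc, Matrix.mul_assoc]
    _ = Pᵀ * E * X * Eᵀ * P := by rw [hES]; simp [Matrix.mul_assoc]
  have hXsymm : Xᵀ = X := hX.1
  have hsymm : Eᵀ * P = Pᵀ * E := by
    have : Eᵀ * P = (Pᵀ * E)ᵀ := by simp [Matrix.transpose_mul]
    rw [this, key]
    simp [Matrix.transpose_mul, hXsymm, Matrix.mul_assoc]
  refine ⟨hsymm, key, ?_⟩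
  rw [hsymm, key]
  have : Pᵀ * E * X * Eᵀ * P = (Eᵀ * P)ᵀ * X * (Eᵀ * P) := by
    simp [Matrix.transpose_mul, Matrix.mul_assoc]
  rw [this]
  have := hX.conjTranspose_mul_mul_same (Eᵀ * P)
  simpa using this
end

section
/- Let n = n_d + n_a, let Θ, Ω ∈ ℝ^{n×n} be invertible, let E = Θ⁻¹ · [[I_{n_d}, 0], [0, 0]] · Ω⁻¹, and let P = Θᵀ · [[P₁, P₂], [P₃, P₄]] · Ω⁻¹ with blocks P₁ ∈ ℝ^{n_d×n_d}, P₂ ∈ ℝ^{n_d×n_a}, P₃ ∈ ℝ^{n_a×n_d}, P₄ ∈ ℝ^{n_a×n_a}. Then EᵀP = PᵀE holds if and only if P₂ = 0 and P₁ = P₁ᵀ. -/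
open Matrix

/-- With `E = Θ⁻¹·[[I,0],[0,0]]·Ω⁻¹` and `P = Θᵀ·[[P₁,P₂],[P₃,P₄]]·Ω⁻¹` (Θ, Ω invertible),
`EᵀP = PᵀE` holds iff `P₂ = 0` and `P₁ = P₁ᵀ`. -/
theorem stmt5 {nd na : ℕ}
    (Θ Ω : Matrix (Fin nd ⊕ Fin na) (Fin nd ⊕ Fin na) ℝ)
    (hΘ : IsUnit Θ) (hΩ : IsUnit Ω)
    (P1 : Matrix (Fin nd) (Fin nd) ℝ) (P2 : Matrix (Fin nd) (Fin na) ℝ)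
    (P3 : Matrix (Fin na) (Fin nd) ℝ) (P4 : Matrix (Fin na) (Fin na) ℝ)
    (E P : Matrix (Fin nd ⊕ Fin na) (Fin nd ⊕ Fin na) ℝ)
    (hE : E = Θ⁻¹ * Matrix.fromBlocks (1 : Matrix (Fin nd) (Fin nd) ℝ) 0 0
      (0 : Matrix (Fin na) (Fin na) ℝ) * Ω⁻¹)
    (hP : P = Θᵀ * Matrix.fromBlocks P1 P2 P3 P4 * Ω⁻¹) :
    Eᵀ * P = Pᵀ * E ↔ (P2 = 0 ∧ P1 = P1ᵀ) := by
  have hΘd : IsUnit Θ.det := (Matrix.isUnit_iff_isUnit_det Θ).mp hΘ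
  have hΩd : IsUnit Ω.det := (Matrix.isUnit_iff_isUnit_det Ω).mp hΩ
  have hΘ1 : (Θ⁻¹)ᵀ * Θᵀ = 1 := by
    rw [← Matrix.transpose_mul, Matrix.mul_nonsing_inv Θ hΘd, Matrix.transpose_one]
  have hΘ2 : Θ * Θ⁻¹ = 1 := Matrix.mul_nonsing_inv Θ hΘd
  set J : Matrix (Fin nd ⊕ Fin na) (Fin nd ⊕ Fin na) ℝ :=
    Matrix.fromBlocks 1 0 0 0 with hJ
  set B : Matrix (Fin nd ⊕ Fin na) (Fin nd ⊕ Fin na) ℝ :=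
    Matrix.fromBlocks P1 P2 P3 P4 with hB
  have h1 : Eᵀ * P = (Ω⁻¹)ᵀ * (Jᵀ * B) * Ω⁻¹ := by
    rw [hE, hP]
    rw [Matrix.transpose_mul, Matrix.transpose_mul]
    calc (Ω⁻¹)ᵀ * (Jᵀ * (Θ⁻¹)ᵀ) * (Θᵀ * B * Ω⁻¹)
        = (Ω⁻¹)ᵀ * Jᵀ * ((Θ⁻¹)ᵀ * Θᵀ) * B * Ω⁻¹ := by noncomm_ring
      _ = (Ω⁻¹)ᵀ * (Jᵀ * B) * Ω⁻¹ := by rw [hΘ1]; noncomm_ring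
  have h2 : Pᵀ * E = (Ω⁻¹)ᵀ * (Bᵀ * J) * Ω⁻¹ := by
    rw [hE, hP]
    rw [Matrix.transpose_mul, Matrix.transpose_mul]
    calc (Ω⁻¹)ᵀ * (Bᵀ * Θ) * (Θ⁻¹ * J * Ω⁻¹)
        = (Ω⁻¹)ᵀ * Bᵀ * (Θ * Θ⁻¹) * J * Ω⁻¹ := by noncomm_ring
      _ = (Ω⁻¹)ᵀ * (Bᵀ * J) * Ω⁻¹ := by rw [hΘ2]; noncomm_ring
  have hJB : Jᵀ * B = Matrix.fromBlocks P1 P2 0 0 := by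
    rw [hJ, hB]
    simp [Matrix.fromBlocks_transpose, Matrix.fromBlocks_multiply]
  have hBJ : Bᵀ * J = Matrix.fromBlocks P1ᵀ 0 P2ᵀ 0 := by
    rw [hJ, hB]
    simp [Matrix.fromBlocks_transpose, Matrix.fromBlocks_multiply]
  rw [h1, h2, hJB, hBJ]
  constructor
  · intro h
    have h' : (Matrix.fromBlocks P1 P2 0 0 : Matrix _ _ ℝ)
        = Matrix.fromBlocks P1ᵀ 0 P2ᵀ 0 := by
      have hΩ1 : Ωᵀ * (Ω⁻¹)ᵀ = 1 := by
        rw [← Matrix.transpose_mul, Matrix.nonsing_inv_mul Ω hΩd, Matrix.transpose_one]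
      have := congrArg (fun M => Ωᵀ * M * Ω) h
      simp only [Matrix.mul_assoc, Matrix.nonsing_inv_mul Ω hΩd, Matrix.mul_one] at this
      rwa [← Matrix.mul_assoc, ← Matrix.mul_assoc, hΩ1, Matrix.one_mul, Matrix.one_mul] at this
    rw [Matrix.fromBlocks_inj] at h'
    exact ⟨h'.2.1, h'.1⟩
  · rintro ⟨h2', h1'⟩
    rw [h2', ← h1']
    simp
end

section
/- Let n = n_d + n_a, let Θ, Ω ∈ ℝ^{n×n} be invertible, let E = Θ⁻¹ · [[I_{n_d}, 0], [0, 0]] · Ω⁻¹, and let P = Θᵀ · [[P₁, 0], [P₃, P₄]] · Ω⁻¹ where P₁ ∈ ℝ^{n_d×n_d} and P₄ ∈ ℝ^{n_a×n_a} are invertible and P₃ ∈ ℝ^{n_a×n_d}. Define X = Ω · [[P₁⁻¹, 0], [0, I_{n_a}]] · Ωᵀ ∈ ℝ^{n×n}, E^⊥ = Ω · [0; I_{n_a}] ∈ ℝ^{n×n_a} (the n×n_a matrix whose top n_d×n_a block is 0 and bottom n_a×n_a block is I), and W = [−P₄⁻¹·P₃·P₁⁻¹, P₄⁻¹] · (Θ⁻¹)ᵀ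 ∈ ℝ^{n_a×n}. Then P is invertible and P⁻¹ = X·Eᵀ + E^⊥·W. -/
open Matrix

/-- With `E = Θ⁻¹·[[I,0],[0,0]]·Ω⁻¹`, `P = Θᵀ·[[P₁,0],[P₃,P₄]]·Ω⁻¹` (Θ, Ω, P₁, P₄
invertible), `X = Ω·[[P₁⁻¹,0],[0,I]]·Ωᵀ`, `E^⊥ = Ω·[0; I]`, and
`W = [−P₄⁻¹P₃P₁⁻¹, P₄⁻¹]·(Θ⁻¹)ᵀ`, the matrix `P` is invertible and
`P⁻¹ = X·Eᵀ + E^⊥·W`. -/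
theorem stmt6 {nd na : ℕ}
    (Θ Ω : Matrix (Fin nd ⊕ Fin na) (Fin nd ⊕ Fin na) ℝ)
    (hΘ : IsUnit Θ) (hΩ : IsUnit Ω)
    (P1 : Matrix (Fin nd) (Fin nd) ℝ) (hP1 : IsUnit P1)
    (P3 : Matrix (Fin na) (Fin nd) ℝ)
    (P4 : Matrix (Fin na) (Fin na) ℝ) (hP4 : IsUnit P4)
    (E P : Matrix (Fin nd ⊕ Fin na) (Fin nd ⊕ Fin na) ℝ)
    (hE : E = Θ⁻¹ * Matrix.fromBlocks (1 : Matrix (Fin nd) (Fin nd) ℝ) 0 0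
      (0 : Matrix (Fin na) (Fin na) ℝ) * Ω⁻¹)
    (hP : P = Θᵀ * Matrix.fromBlocks P1 0 P3 P4 * Ω⁻¹)
    (X : Matrix (Fin nd ⊕ Fin na) (Fin nd ⊕ Fin na) ℝ)
    (hX : X = Ω * Matrix.fromBlocks P1⁻¹ 0 0 (1 : Matrix (Fin na) (Fin na) ℝ) * Ωᵀ)
    (Eperp : Matrix (Fin nd ⊕ Fin na) (Fin na) ℝ)
    (hEperp : Eperp = Ω * Matrix.fromRows (0 : Matrix (Fin nd) (Fin na) ℝ)
      (1 : Matrix (Fin na) (Fin na) ℝ))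
    (W : Matrix (Fin na) (Fin nd ⊕ Fin na) ℝ)
    (hW : W = Matrix.fromCols (-(P4⁻¹ * P3 * P1⁻¹)) P4⁻¹ * (Θ⁻¹)ᵀ) :
    IsUnit P ∧ P⁻¹ = X * Eᵀ + Eperp * W := by
  have hB : IsUnit (Matrix.fromBlocks P1 0 P3 P4) :=
    Matrix.isUnit_fromBlocks_zero₁₂.mpr ⟨hP1, hP4⟩
  have hΘt : IsUnit Θᵀ := (Matrix.isUnit_iff_isUnit_det _).mpr
    (by rw [Matrix.det_transpose]; exact (Matrix.isUnit_iff_isUnit_det _).mp hΘ)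
  have hPunit : IsUnit P := by
    rw [hP]
    exact (hΘt.mul hB).mul (Matrix.isUnit_nonsing_inv_iff.mpr hΩ)
  refine ⟨hPunit, ?_⟩
  have hBinv : (Matrix.fromBlocks P1 0 P3 P4)⁻¹ =
      Matrix.fromBlocks P1⁻¹ 0 (-(P4⁻¹ * P3 * P1⁻¹)) P4⁻¹ :=
    Matrix.inv_fromBlocks_zero₁₂_of_isUnit_iff P1 P3 P4 (by simp [hP1, hP4])
  have hΩd := (Matrix.isUnit_iff_isUnit_det _).mp hΩ
  have hPinv : P⁻¹ = Ω * (Matrix.fromBlocks P1⁻¹ 0 (-(P4⁻¹ * P3 * P1⁻¹)) P4⁻¹) * (Θ⁻¹)ᵀ := by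
    rw [hP, Matrix.mul_inv_rev, Matrix.mul_inv_rev, hBinv,
      Matrix.nonsing_inv_nonsing_inv _ hΩd, ← Matrix.transpose_nonsing_inv, ← Matrix.mul_assoc]
  have hΩt : Ωᵀ * (Ω⁻¹)ᵀ = 1 := by
    rw [← Matrix.transpose_mul, Matrix.nonsing_inv_mul _ hΩd, Matrix.transpose_one]
  have key : Matrix.fromBlocks P1⁻¹ (0 : Matrix (Fin nd) (Fin na) ℝ)
        (-(P4⁻¹ * P3 * P1⁻¹)) P4⁻¹ =
      Matrix.fromBlocks P1⁻¹ 0 0 (1 : Matrix (Fin na) (Fin na) ℝ) *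
        Matrix.fromBlocks (1 : Matrix (Fin nd) (Fin nd) ℝ) 0 0
          (0 : Matrix (Fin na) (Fin na) ℝ) +
      Matrix.fromRows (0 : Matrix (Fin nd) (Fin na) ℝ) (1 : Matrix (Fin na) (Fin na) ℝ) *
        Matrix.fromCols (-(P4⁻¹ * P3 * P1⁻¹)) P4⁻¹ := by
    rw [Matrix.fromRows_mul_fromCols, Matrix.fromBlocks_multiply, Matrix.fromBlocks_add]
    congr 1 <;> simp
  have hFT : (Matrix.fromBlocks (1 : Matrix (Fin nd) (Fin nd) ℝ) 0 0
      (0 : Matrix (Fin na) (Fin na) ℝ))ᵀ =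
      Matrix.fromBlocks (1 : Matrix (Fin nd) (Fin nd) ℝ) 0 0
      (0 : Matrix (Fin na) (Fin na) ℝ) := by
    rw [Matrix.fromBlocks_transpose]; simp
  rw [hPinv, hX, hE, hEperp, hW, key, Matrix.mul_add, Matrix.add_mul]
  congr 1
  · rw [Matrix.transpose_mul, Matrix.transpose_mul, hFT,
      Matrix.mul_assoc (Ω * Matrix.fromBlocks P1⁻¹ 0 0 1) Ωᵀ, ← Matrix.mul_assoc Ωᵀ, hΩt,
      Matrix.one_mul]
    simp only [Matrix.mul_assoc]
  · simp only [Matrix.mul_assoc]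
end

section
/- Suppose F := μ²·I_p − D̃_wᵀD̃_w is invertible. Define Ā = Ã + B̃_w·F⁻¹·D̃_wᵀ·C̃, B̄ = B̃ + B̃_w·F⁻¹·D̃_wᵀ·D̃, Q = C̃ᵀ·(I + D̃_w·F⁻¹·D̃_wᵀ)·C̃, R = D̃ᵀ·(I + D̃_w·F⁻¹·D̃_wᵀ)·D̃, S = C̃ᵀ·(I + D̃_w·F⁻¹·D̃_wᵀ)·D̃, and G = B̃_w·F⁻¹·B̃_wᵀ. Then for every P ∈ ℝ^{d×d} and K ∈ ℝ^{m×d}: Ã_clᵀP + P·Ã_cl + Γ̃ᵀΓ̃ + (P·B̃_w + Γ̃ᵀD̃_w)·F⁻¹·(B̃_wᵀP + D̃_wᵀΓ̃) = ĀᵀP + PĀ + Q + PGP + KᵀRK + Kᵀ(B̄ᵀP + Sᵀ) + (PB̄ + S)K. (This identity converts the Schur-complemented H∞ inequality into the Riccati form used to define OP₂.) -/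
open Matrix

/-- The identity converting the Schur-complemented H∞ inequality into the
Riccati form used to define OP₂. -/
theorem stmt15 {d m p : ℕ} (At Ct : Matrix (Fin d) (Fin d) ℝ)
    (Bt Dt : Matrix (Fin d) (Fin m) ℝ) (Bw Dw : Matrix (Fin d) (Fin p) ℝ)
    (μ : ℝ) (F : Matrix (Fin p) (Fin p) ℝ)
    (hF : F = μ ^ 2 • (1 : Matrix (Fin p) (Fin p) ℝ) - Dwᵀ * Dw)
    (hFunit : IsUnit F)
    (Abar : Matrix (Fin d) (Fin d) ℝ) (hAbar : Abar = At + Bw * F⁻¹ * Dwᵀ * Ct)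
    (Bbar : Matrix (Fin d) (Fin m) ℝ) (hBbar : Bbar = Bt + Bw * F⁻¹ * Dwᵀ * Dt)
    (Q : Matrix (Fin d) (Fin d) ℝ)
    (hQ : Q = Ctᵀ * ((1 : Matrix (Fin d) (Fin d) ℝ) + Dw * F⁻¹ * Dwᵀ) * Ct)
    (R : Matrix (Fin m) (Fin m) ℝ)
    (hR : R = Dtᵀ * ((1 : Matrix (Fin d) (Fin d) ℝ) + Dw * F⁻¹ * Dwᵀ) * Dt)
    (S : Matrix (Fin d) (Fin m) ℝ)
    (hS : S = Ctᵀ * ((1 : Matrix (Fin d) (Fin d) ℝ) + Dw * F⁻¹ * Dwᵀ) * Dt)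
    (G : Matrix (Fin d) (Fin d) ℝ) (hG : G = Bw * F⁻¹ * Bwᵀ) :
    ∀ (P : Matrix (Fin d) (Fin d) ℝ) (K : Matrix (Fin m) (Fin d) ℝ),
      (At + Bt * K)ᵀ * P + P * (At + Bt * K)
          + (Ct + Dt * K)ᵀ * (Ct + Dt * K)
          + (P * Bw + (Ct + Dt * K)ᵀ * Dw) * F⁻¹
            * (Bwᵀ * P + Dwᵀ * (Ct + Dt * K))
        = Abarᵀ * P + P * Abar + Q + P * G * P + Kᵀ * R * K
          + Kᵀ * (Bbarᵀ * P + Sᵀ) + (P * Bbar + S) * K := by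
  intro P K
  have hFt : Fᵀ = F := by
    rw [hF]; simp [Matrix.transpose_sub, Matrix.transpose_smul, Matrix.transpose_mul]
  have hE : (F⁻¹)ᵀ = F⁻¹ := by
    rw [Matrix.transpose_nonsing_inv, hFt]
  subst hAbar hBbar hQ hR hS hG
  simp only [Matrix.transpose_add, Matrix.transpose_mul, Matrix.transpose_one,
    Matrix.transpose_transpose, hE, Matrix.add_mul, Matrix.mul_add,
    Matrix.mul_one, Matrix.one_mul, ← Matrix.mul_assoc]
  abel
end
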